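/- Let λ ∈ ℂ with 0 < |λ| < 1/2, and define φ on the open unit disk 𝔻 by φ(z) = z − λ·|z|². Then: (i) the Jacobian of φ satisfies J_φ(z) = 1 − 2·Re(λ·z̄) ≥ 1 − 2|λ| > 0 for all z ∈ 𝔻; (ii) Dφ(z) = z·φ_z(z) − z̄·φ_z̄(z) = z and D²φ(z) = z for all z ∈ 𝔻; and (iii) φ is injective on 𝔻. -/

import Mathlib

open Complex Metric Set

noncomputable def wz (f : ℂ → ℂ) (z : ℂ) : ℂ :=
  (1 / 2) * (fderiv ℝ f z 1 - Complex.I * fderiv ℝ f z Complex.I)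

noncomputable def wzbar (f : ℂ → ℂ) (z : ℂ) : ℂ :=
  (1 / 2) * (fderiv ℝ f z 1 + Complex.I * fderiv ℝ f z Complex.I)

noncomputable def Dop (f : ℂ → ℂ) (z : ℂ) : ℂ :=
  z * wz f z - (starRingEnd ℂ) z * wzbar f z

lemma hasD (lam : ℂ) (φ : ℂ → ℂ) (hφ : ∀ z, φ z = z - lam * (Complex.normSq z : ℂ)) (z : ℂ) :
    HasFDerivAt φ (ContinuousLinearMap.id ℝ ℂ - lam • (z • (Complex.conjCLE : ℂ →L[ℝ] ℂ)
      + ((starRingEnd ℂ) z) • ContinuousLinearMap.id ℝ ℂ)) z := by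
  have hφ' : φ = fun w => w - lam * (w * (starRingEnd ℂ) w) := by
    funext w; rw [hφ, Complex.mul_conj]
  rw [hφ']
  have h1 : HasFDerivAt (fun w : ℂ => w) (ContinuousLinearMap.id ℝ ℂ) z := hasFDerivAt_id z
  have h2 : HasFDerivAt (fun w : ℂ => (starRingEnd ℂ) w) (Complex.conjCLE : ℂ →L[ℝ] ℂ) z :=
    Complex.conjCLE.hasFDerivAt
  exact h1.sub ((h1.mul h2).const_mul lam)

lemma wz_eq (lam : ℂ) (φ : ℂ → ℂ) (hφ : ∀ z, φ z = z - lam * (Complex.normSq z : ℂ)) (z : ℂ) :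
    wz φ z = 1 - lam * (starRingEnd ℂ) z := by
  rw [wz, (hasD lam φ hφ z).fderiv]
  simp [Complex.conjCLE_apply]
  ring_nf
  simp [Complex.I_sq]
  ring

lemma wzbar_eq (lam : ℂ) (φ : ℂ → ℂ) (hφ : ∀ z, φ z = z - lam * (Complex.normSq z : ℂ)) (z : ℂ) :
    wzbar φ z = -(lam * z) := by
  rw [wzbar, (hasD lam φ hφ z).fderiv]
  simp [Complex.conjCLE_apply]
  ring_nf
  simp [Complex.I_sq]
  ring

lemma Dop_id (z : ℂ) : Dop (fun w => w) z = z := by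
  have h : fderiv ℝ (fun w : ℂ => w) z = ContinuousLinearMap.id ℝ ℂ := fderiv_id
  simp [Dop, wz, wzbar, h]
  ring

theorem stmt_19 (lam : ℂ) (hlam0 : 0 < ‖lam‖)
    (hlam : ‖lam‖ < 1 / 2)
    (φ : ℂ → ℂ) (hφ : ∀ z, φ z = z - lam * (Complex.normSq z : ℂ)) :
    (∀ z ∈ ball (0 : ℂ) 1,
        ‖wz φ z‖ ^ 2 - ‖wzbar φ z‖ ^ 2
            = 1 - 2 * (lam * (starRingEnd ℂ) z).re ∧
          1 - 2 * ‖lam‖ ≤ 1 - 2 * (lam * (starRingEnd ℂ) z).re ∧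
          0 < 1 - 2 * ‖lam‖) ∧
      (∀ z ∈ ball (0 : ℂ) 1, Dop φ z = z ∧ Dop (Dop φ) z = z) ∧
      Set.InjOn φ (ball (0 : ℂ) 1) := by
  have hDop : ∀ z : ℂ, Dop φ z = z := by
    intro z
    rw [Dop, wz_eq lam φ hφ, wzbar_eq lam φ hφ]
    ring
  refine ⟨?_, ?_, ?_⟩
  · intro z hz
    rw [mem_ball, dist_zero_right] at hz
    have habsz : ‖z‖ < 1 := hz
    have hre : (lam * (starRingEnd ℂ) z).re ≤ ‖lam‖ := by
      calc (lam * (starRingEnd ℂ) z).re ≤ ‖lam * (starRingEnd ℂ) z‖ :=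
            Complex.re_le_norm _
        _ = ‖lam‖ * ‖z‖ := by simp [map_mul]
        _ ≤ ‖lam‖ * 1 := by
            exact mul_le_mul_of_nonneg_left habsz.le (norm_nonneg lam)
        _ = ‖lam‖ := mul_one _
    refine ⟨?_, by linarith, by linarith⟩
    rw [wz_eq lam φ hφ, wzbar_eq lam φ hφ]
    simp only [Complex.sq_norm, Complex.normSq_apply, Complex.sub_re, Complex.sub_im,
      Complex.mul_re, Complex.mul_im, Complex.conj_re, Complex.conj_im, Complex.one_re,
      Complex.one_im, Complex.neg_re, Complex.neg_im]
    ring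
  · intro z _
    refine ⟨hDop z, ?_⟩
    have : Dop φ = fun w => w := funext hDop
    rw [this]
    exact Dop_id z
  · intro a ha b hb hab
    rw [mem_ball, dist_zero_right] at ha hb
    by_contra hne
    have key : a - b = lam * ((Complex.normSq a : ℂ) - (Complex.normSq b : ℂ)) := by
      have := hab
      rw [hφ a, hφ b] at this
      linear_combination this
    have habs : ‖a - b‖ = ‖lam‖ * |Complex.normSq a - Complex.normSq b| := by
      rw [key, norm_mul]
      congr 1
      rw [← Complex.ofReal_sub, Complex.norm_real, Real.norm_eq_abs]
    have h1 : |Complex.normSq a - Complex.normSq b|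
        ≤ (‖a‖ + ‖b‖) * ‖a - b‖ := by
      have hsq : Complex.normSq a - Complex.normSq b
          = (‖a‖ + ‖b‖) * (‖a‖ - ‖b‖) := by
        rw [← Complex.sq_norm, ← Complex.sq_norm]; ring
      rw [hsq, abs_mul]
      have h2 : |‖a‖ - ‖b‖| ≤ ‖a - b‖ :=
        abs_norm_sub_norm_le a b
      have h3 : |‖a‖ + ‖b‖| = ‖a‖ + ‖b‖ :=
        abs_of_nonneg (by positivity)
      rw [h3]
      exact mul_le_mul_of_nonneg_left h2 (by positivity)
    have hpos : 0 < ‖a - b‖ := by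
      simpa [sub_eq_zero] using hne
    have ha' : ‖a‖ < 1 := by exact ha
    have hb' : ‖b‖ < 1 := by exact hb
    have h4 : ‖a - b‖
        ≤ ‖lam‖ * ((‖a‖ + ‖b‖) * ‖a - b‖) := by
      have := mul_le_mul_of_nonneg_left h1 (norm_nonneg lam)
      rwa [← habs] at this
    have h6 : ‖lam‖ * (‖a‖ + ‖b‖) < 1 := by nlinarith
    have h7 : ‖lam‖ * (‖a‖ + ‖b‖) * ‖a - b‖
        < 1 * ‖a - b‖ := mul_lt_mul_of_pos_right h6 hpos
    nlinarith
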